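/- Let S be a subsemigroup of End(X) admitting at least one bijective S-action homomorphism X → S. Then the set of such bijective S-action homomorphisms, with group structure f * g := f ∘ e⁻¹ ∘ g for a fixed one e, is isomorphic to the group of invertible elements of the centralizer of S in End(X). -/

import Mathlib

/-- Unrepresentations of a transformation semigroup S ⊆ End(X): bijective
S-action homomorphisms X → S. -/
def Unrep {X : Type*} (S : Set (X → X)) : Type _ :=
  {φ : X ≃ S // ∀ f ∈ S, ∀ x, ((φ (f x) : X → X)) = f ∘ (φ x : X → X)}

/-- Invertible elements of the centralizer of S in End(X). -/
def CentUnit {X : Type*} (S : Set (X → X)) : Type _ :=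
  {ψ : X → X // Function.Bijective ψ ∧ ∀ f ∈ S, ψ ∘ f = f ∘ ψ}

/-- If S admits at least one unrepresentation e, then the set of
unrepresentations with multiplication f * g := f ∘ e⁻¹ ∘ g is isomorphic to
the group of invertible elements of the centralizer of S in End(X). -/
theorem stmt7 {X : Type*} (S : Set (X → X)) (hS : ∀ f ∈ S, ∀ g ∈ S, f ∘ g ∈ S)
    (e : Unrep S) :
    ∃ Φ : Unrep S ≃ CentUnit S,
      ∀ f g fg : Unrep S, fg.1 = (g.1.trans e.1.symm).trans f.1 →
        (Φ fg).1 = (Φ f).1 ∘ (Φ g).1 := by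
  refine ⟨{
    toFun := fun f => ⟨fun x => e.1.symm (f.1 x),
      (f.1.trans e.1.symm).bijective, ?_⟩
    invFun := fun ψ => ⟨(Equiv.ofBijective ψ.1 ψ.2.1).trans e.1, ?_⟩
    left_inv := ?_
    right_inv := ?_ }, ?_⟩
  · intro h hh
    funext x
    show e.1.symm (f.1 (h x)) = h (e.1.symm (f.1 x))
    apply e.1.injective
    rw [Equiv.apply_symm_apply]
    apply Subtype.ext
    rw [f.2 h hh x]
    have := e.2 h hh (e.1.symm (f.1 x))
    rw [this, Equiv.apply_symm_apply]
  · intro h hh x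
    show ((e.1 (ψ.1 (h x)) : X → X)) = h ∘ (e.1 (ψ.1 x) : X → X)
    have hc : ψ.1 (h x) = h (ψ.1 x) := congrFun (ψ.2.2 h hh) x
    rw [hc, e.2 h hh (ψ.1 x)]
  · intro f
    apply Subtype.ext
    ext x
    simp
  · intro ψ
    apply Subtype.ext
    funext x
    simp
  · intro f g fg hfg
    funext x
    show e.1.symm (fg.1 x) = e.1.symm (f.1 (e.1.symm (g.1 x)))
    simp [hfg]
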